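/- Let P be a probability mass function on a finite alphabet 𝒳 with |𝒳| ≥ 1, and let X_1,…,X_N be drawn i.i.d. from P, with empirical distribution T. Then for every s > 0, the probability that V(T, P) ≥ s is at most 2|𝒳| · exp(−8Ns²/|𝒳|²). -/

import Mathlib

open MeasureTheory ProbabilityTheory

section Aux
open Real

lemma bern_aux {p : ℝ} (hp0 : 0 ≤ p) (hp1 : p ≤ 1) (t : ℝ) :
    (1 - p) * Real.exp (-(p * t)) + p * Real.exp ((1 - p) * t) ≤ Real.exp (t ^ 2 / 8) := by
  have hD : ∀ x : ℝ, 0 < 1 - p + p * Real.exp x := by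
    intro x
    rcases lt_or_eq_of_le hp1 with h | h
    · nlinarith [Real.exp_pos x]
    · rw [h]; simpa using Real.exp_pos x
  set D : ℝ → ℝ := fun x => 1 - p + p * Real.exp x with hD_def
  have hDdiff : ∀ x, HasDerivAt D (p * Real.exp x) x := by
    intro x
    exact ((Real.hasDerivAt_exp x).const_mul p).const_add (1 - p)
  set h : ℝ → ℝ := fun x => p * Real.exp x / D x - p - x / 4 with hh_def
  have hh' : ∀ x, HasDerivAt h
      ((p * Real.exp x * D x - p * Real.exp x * (p * Real.exp x)) / (D x) ^ 2 - 1 / 4) x := by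
    intro x
    exact ((((Real.hasDerivAt_exp x).const_mul p).div (hDdiff x) (hD x).ne').sub_const p).sub
      ((hasDerivAt_id x).div_const 4) |>.congr_deriv (by ring)
  have hh'neg : ∀ x, (p * Real.exp x * D x - p * Real.exp x * (p * Real.exp x)) / (D x) ^ 2
      - 1 / 4 ≤ 0 := by
    intro x
    have h1 : (p * Real.exp x * D x - p * Real.exp x * (p * Real.exp x)) / (D x) ^ 2 ≤ 1 / 4 := by
      rw [div_le_iff₀ (pow_pos (hD x) 2)]
      have hE := Real.exp_pos x
      nlinarith [sq_nonneg (1 - p - p * Real.exp x)]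
    linarith
  have hanti : Antitone h :=
    antitone_of_hasDerivAt_nonpos hh' hh'neg
  have hh0 : h 0 = 0 := by simp [hh_def, hD_def]
  set φ : ℝ → ℝ := fun x => Real.log (D x) - p * x - x ^ 2 / 8 with hφ_def
  have hφ' : ∀ x, HasDerivAt φ (h x) x := by
    intro x
    exact (((hDdiff x).log (hD x).ne').sub ((hasDerivAt_id x).const_mul p)).sub
      ((hasDerivAt_pow 2 x).div_const 8) |>.congr_deriv (by simp [hh_def]; ring)
  have hφ0 : φ 0 = 0 := by simp [hφ_def, hD_def]
  have hφle : ∀ x, φ x ≤ 0 := by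
    intro x
    rcases le_total 0 x with hx | hx
    · have : AntitoneOn φ (Set.Ici 0) := by
        apply antitoneOn_of_hasDerivWithinAt_nonpos (convex_Ici 0)
          (fun y _ => (hφ' y).continuousAt.continuousWithinAt)
          (fun y _ => (hφ' y).hasDerivWithinAt)
        intro y hy
        rw [interior_Ici] at hy
        have := hanti (le_of_lt hy)
        rw [hh0] at this
        exact this
      have := this Set.self_mem_Ici hx hx
      rwa [hφ0] at this
    · have : MonotoneOn φ (Set.Iic 0) := by
        apply monotoneOn_of_hasDerivWithinAt_nonneg (convex_Iic 0)
          (fun y _ => (hφ' y).continuousAt.continuousWithinAt)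
          (fun y _ => (hφ' y).hasDerivWithinAt)
        intro y hy
        rw [interior_Iic] at hy
        have := hanti (le_of_lt hy)
        rw [hh0] at this
        exact this
      have := this hx Set.self_mem_Iic hx
      rwa [hφ0] at this
  have hlog : D t ≤ Real.exp (p * t + t ^ 2 / 8) := by
    have := hφle t
    have h2 : Real.log (D t) ≤ p * t + t ^ 2 / 8 := by simp [hφ_def] at this; linarith
    calc D t = Real.exp (Real.log (D t)) := (Real.exp_log (hD t)).symm
    _ ≤ _ := Real.exp_le_exp.2 h2
  have hLHS : (1 - p) * Real.exp (-(p * t)) + p * Real.exp ((1 - p) * t)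
      = Real.exp (-(p * t)) * D t := by
    have e1 : Real.exp ((1 - p) * t) = Real.exp t * Real.exp (-(p * t)) := by
      rw [← Real.exp_add]; ring_nf
    rw [e1]; simp [hD_def]; ring
  rw [hLHS]
  calc Real.exp (-(p * t)) * D t ≤ Real.exp (-(p * t)) * Real.exp (p * t + t ^ 2 / 8) := by
        exact mul_le_mul_of_nonneg_left hlog (Real.exp_pos _).le
  _ = Real.exp (t ^ 2 / 8) := by rw [← Real.exp_add]; ring_nf

lemma ite_integral {Ω : Type*} [MeasurableSpace Ω] (μ : Measure Ω) [IsProbabilityMeasure μ]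
    (q : Ω → Prop) [DecidablePred q] (hA : MeasurableSet {ω | q ω}) (c₁ c₂ : ℝ) :
    Integrable (fun ω => if q ω then c₁ else c₂) μ ∧
    ∫ ω, (if q ω then c₁ else c₂) ∂μ
      = (μ {ω | q ω}).toReal * c₁ + (1 - (μ {ω | q ω}).toReal) * c₂ := by
  have hrw : (fun ω => if q ω then c₁ else c₂)
      = fun ω => Set.indicator {ω | q ω} (fun _ => c₁ - c₂) ω + c₂ := by
    funext ω; by_cases h : q ω <;> simp [h]
  have hind : Integrable (fun ω => Set.indicator {ω | q ω} (fun _ => c₁ - c₂) ω) μ :=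
    (integrable_const (c₁ - c₂)).indicator hA
  constructor
  · rw [hrw]; exact hind.add (integrable_const c₂)
  · rw [hrw, integral_add hind (integrable_const c₂), integral_indicator_const _ hA,
      integral_const]
    simp [smul_eq_mul, measureReal_def]
    ring

lemma ite_mgf {Ω : Type*} [MeasurableSpace Ω] (μ : Measure Ω) [IsProbabilityMeasure μ]
    (q : Ω → Prop) [DecidablePred q] (hA : MeasurableSet {ω | q ω}) (v₁ v₂ t : ℝ) :
    Integrable (fun ω => Real.exp (t * (if q ω then v₁ else v₂))) μ ∧
    mgf (fun ω => if q ω then v₁ else v₂) μ t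
      = (μ {ω | q ω}).toReal * Real.exp (t * v₁)
        + (1 - (μ {ω | q ω}).toReal) * Real.exp (t * v₂) := by
  have hrw : (fun ω => Real.exp (t * (if q ω then v₁ else v₂)))
      = fun ω => if q ω then Real.exp (t * v₁) else Real.exp (t * v₂) := by
    funext ω; by_cases h : q ω <;> simp [h]
  obtain ⟨hint, hval⟩ := ite_integral μ q hA (Real.exp (t * v₁)) (Real.exp (t * v₂))
  constructor
  · rw [hrw]; exact hint
  · rw [mgf, hrw]; exact hval

lemma hoeffding_sum {Ω : Type*} [MeasurableSpace Ω] (μ : Measure Ω) [IsProbabilityMeasure μ]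
    {N : ℕ} (Y : Fin N → Ω → ℝ) (hYmeas : ∀ k, Measurable (Y k))
    (hYindep : iIndepFun Y μ)
    (hint : ∀ k u, Integrable (fun ω => Real.exp (u * Y k ω)) μ)
    (hmgf : ∀ k u, mgf (Y k) μ u ≤ Real.exp (u ^ 2 / 8))
    (t : ℝ) (ht : 0 ≤ t) :
    (μ {ω | (N : ℝ) * t ≤ ∑ k, Y k ω}).toReal ≤ Real.exp (-2 * N * t ^ 2) := by
  have hS : Integrable (fun ω => Real.exp ((4 * t) * (∑ k, Y k) ω)) μ :=
    hYindep.integrable_exp_mul_sum hYmeas (fun k _ => hint k (4 * t))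
  have hch := measure_ge_le_exp_mul_mgf (X := ∑ k, Y k) (μ := μ) ((N : ℝ) * t)
    (by linarith : (0:ℝ) ≤ 4 * t) hS
  have hmg : mgf (∑ k, Y k) μ (4 * t) = ∏ k, mgf (Y k) μ (4 * t) :=
    hYindep.mgf_sum hYmeas Finset.univ
  have hprod : ∏ k : Fin N, mgf (Y k) μ (4 * t) ≤ Real.exp ((4 * t) ^ 2 / 8) ^ N := by
    calc ∏ k : Fin N, mgf (Y k) μ (4 * t) ≤ ∏ _k : Fin N, Real.exp ((4 * t) ^ 2 / 8) :=
          Finset.prod_le_prod (fun k _ => mgf_nonneg) (fun k _ => hmgf k (4 * t))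
    _ = Real.exp ((4 * t) ^ 2 / 8) ^ N := by simp
  have hset : {ω | (N : ℝ) * t ≤ (∑ k, Y k) ω} = {ω | (N : ℝ) * t ≤ ∑ k, Y k ω} := by
    ext ω; simp [Finset.sum_apply]
  rw [hset] at hch
  calc (μ {ω | (N : ℝ) * t ≤ ∑ k, Y k ω}).toReal
      ≤ Real.exp (-(4 * t) * ((N : ℝ) * t)) * mgf (∑ k, Y k) μ (4 * t) := hch
  _ ≤ Real.exp (-(4 * t) * ((N : ℝ) * t)) * Real.exp ((4 * t) ^ 2 / 8) ^ N := by
      rw [hmg]; exact mul_le_mul_of_nonneg_left hprod (Real.exp_pos _).le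
  _ = Real.exp (-2 * N * t ^ 2) := by
      rw [← Real.exp_nat_mul, ← Real.exp_add]
      congr 1
      ring

end Aux

/-- Total variation distance between two probability mass functions on a
finite alphabet: `V(P,Q) = (1/2) * ∑ a, |P a - Q a|`. -/
noncomputable def tvDist {𝒳 : Type*} [Fintype 𝒳] (P Q : 𝒳 → ℝ) : ℝ :=
  (1 / 2) * ∑ a, |P a - Q a|

/-- Empirical distribution of a sample `x : Fin N → 𝒳`:
`T a = (1/N) * #{k : x k = a}`. -/
noncomputable def empDist {𝒳 : Type*} [Fintype 𝒳] [DecidableEq 𝒳] {N : ℕ}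
    (x : Fin N → 𝒳) : 𝒳 → ℝ :=
  fun a => ((Finset.univ.filter fun k => x k = a).card : ℝ) / N

theorem stmt_5 {𝒳 : Type*} [Fintype 𝒳] [DecidableEq 𝒳] [MeasurableSpace 𝒳]
    [MeasurableSingletonClass 𝒳] (hX : 1 ≤ Fintype.card 𝒳)
    {Ω : Type*} [MeasurableSpace Ω] (μ : Measure Ω) [IsProbabilityMeasure μ]
    (P : 𝒳 → ℝ) (hP0 : ∀ a, 0 ≤ P a) (hP1 : ∑ a, P a = 1)
    {N : ℕ} (hN : 0 < N) (X : Fin N → Ω → 𝒳)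
    (hmeas : ∀ k, Measurable (X k))
    (hindep : iIndepFun X μ)
    (hdist : ∀ k a, μ (X k ⁻¹' {a}) = ENNReal.ofReal (P a))
    (s : ℝ) (hs : 0 < s) :
    (μ {ω | s ≤ tvDist (empDist fun k => X k ω) P}).toReal ≤
      2 * (Fintype.card 𝒳 : ℝ) * Real.exp (-8 * N * s ^ 2 / (Fintype.card 𝒳 : ℝ) ^ 2) := by
  classical
  haveI : Nonempty 𝒳 := Fintype.card_pos_iff.mp hX
  set K : ℝ := (Fintype.card 𝒳 : ℝ) with hK_def
  have hK0 : (0:ℝ) < K := by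
    rw [hK_def]; exact_mod_cast Nat.lt_of_lt_of_le Nat.zero_lt_one hX
  have hN0 : (0:ℝ) < (N : ℝ) := by exact_mod_cast hN
  set t : ℝ := 2 * s / K with ht_def
  have ht0 : 0 ≤ t := by positivity
  have hPa1 : ∀ a, P a ≤ 1 := fun a =>
    hP1 ▸ Finset.single_le_sum (fun b _ => hP0 b) (Finset.mem_univ a)
  have hμa : ∀ k (a : 𝒳), (μ {ω | X k ω = a}).toReal = P a := fun k a => by
    have : {ω | X k ω = a} = X k ⁻¹' {a} := rfl
    rw [this, hdist k a, ENNReal.toReal_ofReal (hP0 a)]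
  -- the one-sided tail bound
  have key : ∀ (σ : ℝ), σ ^ 2 = 1 → ∀ a : 𝒳,
      (μ {ω | (N : ℝ) * t ≤
          ∑ k, (if X k ω = a then σ * (1 - P a) else σ * (0 - P a))}).toReal
        ≤ Real.exp (-2 * N * t ^ 2) := by
    intro σ hσ a
    set v₁ : ℝ := σ * (1 - P a) with hv₁
    set v₂ : ℝ := σ * (0 - P a) with hv₂
    set g : 𝒳 → ℝ := fun b => if b = a then v₁ else v₂ with hg
    have hAk : ∀ k : Fin N, MeasurableSet {ω | X k ω = a} :=
      fun k => hmeas k (measurableSet_singleton a)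
    have hitem := fun (k : Fin N) (u : ℝ) =>
      ite_mgf μ (fun ω => X k ω = a) (hAk k) v₁ v₂ u
    apply hoeffding_sum μ (fun k ω => if X k ω = a then v₁ else v₂)
    · intro k
      exact (measurable_of_countable g).comp (hmeas k)
    · exact hindep.comp (fun _ => g) (fun _ => measurable_of_countable g)
    · intro k u
      exact (hitem k u).1
    · intro k u
      rw [(hitem k u).2, hμa k a]
      have e₁ : u * v₁ = (1 - P a) * (u * σ) := by rw [hv₁]; ring
      have e₂ : u * v₂ = -(P a * (u * σ)) := by rw [hv₂]; ring
      have e₃ : (u * σ) ^ 2 / 8 = u ^ 2 / 8 := by rw [mul_pow, hσ, mul_one]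
      have := bern_aux (hP0 a) (hPa1 a) (u * σ)
      rw [e₃] at this
      rw [e₁, e₂]
      linarith
    · exact ht0
  -- the union bound inclusion
  have hsum : ∀ (σ : ℝ) (a : 𝒳) (ω : Ω),
      ∑ k, (if X k ω = a then σ * (1 - P a) else σ * (0 - P a))
        = σ * ((N : ℝ) * ((empDist fun k => X k ω) a - P a)) := by
    intro σ a ω
    have hpt : ∀ k : Fin N, (if X k ω = a then σ * (1 - P a) else σ * (0 - P a))
        = σ * ((if X k ω = a then (1:ℝ) else 0) - P a) := by
      intro k; by_cases h : X k ω = a <;> simp [h]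
    simp_rw [hpt]
    rw [← Finset.mul_sum, Finset.sum_sub_distrib, Finset.sum_boole, Finset.sum_const,
      Finset.card_univ, Fintype.card_fin]
    simp only [empDist, smul_eq_mul, nsmul_eq_mul]
    field_simp
  have hsub : {ω | s ≤ tvDist (empDist fun k => X k ω) P} ⊆
      ⋃ a : 𝒳, ({ω | (N : ℝ) * t ≤
          ∑ k, (if X k ω = a then (1:ℝ) * (1 - P a) else (1:ℝ) * (0 - P a))} ∪
        {ω | (N : ℝ) * t ≤
          ∑ k, (if X k ω = a then (-1:ℝ) * (1 - P a) else (-1:ℝ) * (0 - P a))}) := by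
    intro ω hω
    simp only [Set.mem_setOf_eq] at hω
    have hex : ∃ a : 𝒳, t ≤ |(empDist fun k => X k ω) a - P a| := by
      by_contra hcon
      push_neg at hcon
      have hlt : ∑ a, |(empDist fun k => X k ω) a - P a| < ∑ _a : 𝒳, t :=
        Finset.sum_lt_sum_of_nonempty Finset.univ_nonempty (fun a _ => hcon a)
      rw [Finset.sum_const, Finset.card_univ, nsmul_eq_mul] at hlt
      have hKt : K * t = 2 * s := by rw [ht_def]; field_simp
      rw [tvDist] at hω
      rw [hK_def] at hKt
      nlinarith
    obtain ⟨a, ha⟩ := hex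
    rcases le_abs.mp ha with h1 | h1
    · refine Set.mem_iUnion.2 ⟨a, Or.inl ?_⟩
      simp only [Set.mem_setOf_eq]
      rw [hsum 1 a ω, one_mul]
      exact mul_le_mul_of_nonneg_left h1 hN0.le
    · refine Set.mem_iUnion.2 ⟨a, Or.inr ?_⟩
      simp only [Set.mem_setOf_eq]
      rw [hsum (-1) a ω]
      have : (-1 : ℝ) * ((N : ℝ) * ((empDist fun k => X k ω) a - P a))
          = (N : ℝ) * (-((empDist fun k => X k ω) a - P a)) := by ring
      rw [this]
      exact mul_le_mul_of_nonneg_left h1 hN0.le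
  -- put it together
  set A : 𝒳 → Set Ω := fun a => {ω | (N : ℝ) * t ≤
      ∑ k, (if X k ω = a then (1:ℝ) * (1 - P a) else (1:ℝ) * (0 - P a))} with hA_def
  set B : 𝒳 → Set Ω := fun a => {ω | (N : ℝ) * t ≤
      ∑ k, (if X k ω = a then (-1:ℝ) * (1 - P a) else (-1:ℝ) * (0 - P a))} with hB_def
  have hfin : ∀ a : 𝒳, μ (A a) + μ (B a) ≠ ⊤ :=
    fun a => ENNReal.add_ne_top.mpr ⟨measure_ne_top μ _, measure_ne_top μ _⟩
  have step1 : μ {ω | s ≤ tvDist (empDist fun k => X k ω) P}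
      ≤ ∑ a : 𝒳, (μ (A a) + μ (B a)) := by
    refine le_trans (measure_mono hsub) (le_trans (measure_iUnion_le _) ?_)
    rw [tsum_fintype]
    exact Finset.sum_le_sum fun a _ => measure_union_le _ _
  have step2 : (μ {ω | s ≤ tvDist (empDist fun k => X k ω) P}).toReal
      ≤ ∑ a : 𝒳, ((μ (A a)).toReal + (μ (B a)).toReal) := by
    have := ENNReal.toReal_mono (ENNReal.sum_ne_top.mpr fun a _ => hfin a) step1
    rwa [ENNReal.toReal_sum (fun a _ => hfin a),
      Finset.sum_congr rfl (fun a _ =>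
        ENNReal.toReal_add (measure_ne_top μ _) (measure_ne_top μ _))] at this
  have hexp : Real.exp (-2 * N * t ^ 2)
      = Real.exp (-8 * N * s ^ 2 / K ^ 2) := by
    congr 1
    rw [ht_def]
    field_simp
    ring
  calc (μ {ω | s ≤ tvDist (empDist fun k => X k ω) P}).toReal
      ≤ ∑ a : 𝒳, ((μ (A a)).toReal + (μ (B a)).toReal) := step2
  _ ≤ ∑ _a : 𝒳, (Real.exp (-2 * N * t ^ 2) + Real.exp (-2 * N * t ^ 2)) := by
      refine Finset.sum_le_sum fun a _ => add_le_add ?_ ?_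
      · exact key 1 (by norm_num) a
      · exact key (-1) (by norm_num) a
  _ = 2 * K * Real.exp (-8 * N * s ^ 2 / K ^ 2) := by
      rw [Finset.sum_const, Finset.card_univ, nsmul_eq_mul, hexp]
      ring
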